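/- Let M be a symmetric positive definite 2×2 matrix, and let e = f ⊕ g with ‖e‖ ≥ 1 + κ(M), where κ(M) := √(‖M‖ ‖M⁻¹‖). Then ⟨f, M g⟩ > 0. -/

import Mathlib

set_option maxHeartbeats 1000000
open scoped RealInnerProductSpace

def det2 (f g : ℤ × ℤ) : ℤ := f.1 * g.2 - f.2 * g.1

def ip2 (f g : ℤ × ℤ) : ℤ := f.1 * g.1 + f.2 * g.2

/-- A direct acute basis of `ℤ²`. -/
def IsDAB (f g : ℤ × ℤ) : Prop := det2 f g = 1 ∧ 0 ≤ ip2 f g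

def qf (M : Matrix (Fin 2) (Fin 2) ℝ) (f g : ℤ × ℤ) : ℝ :=
  (f.1 : ℝ) * (M 0 0 * g.1 + M 0 1 * g.2) + (f.2 : ℝ) * (M 1 0 * g.1 + M 1 1 * g.2)

/-- Operator norm of a `2×2` real matrix acting on Euclidean space. -/
noncomputable def opNorm (M : Matrix (Fin 2) (Fin 2) ℝ) : ℝ :=
  ‖Matrix.toEuclideanCLM (𝕜 := ℝ) M‖

lemma quad_le_opNorm (W : Matrix (Fin 2) (Fin 2) ℝ) (x1 x2 : ℝ) :
    x1*(W 0 0*x1 + W 0 1*x2) + x2*(W 1 0*x1 + W 1 1*x2) ≤ opNorm W * (x1^2+x2^2) := by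
  set v : Fin 2 → ℝ := ![x1, x2] with hv
  set ev : EuclideanSpace ℝ (Fin 2) := (WithLp.equiv 2 _).symm v
  have h1 : Matrix.toEuclideanCLM (𝕜 := ℝ) W ev = (WithLp.equiv 2 _).symm (W.mulVec v) :=
    Matrix.toEuclideanCLM_toLp W v
  have h2 : (inner ℝ ev (Matrix.toEuclideanCLM (𝕜 := ℝ) W ev) : ℝ) ≤ ‖ev‖ * ‖Matrix.toEuclideanCLM (𝕜 := ℝ) W ev‖ :=
    real_inner_le_norm _ _
  have h3 : ‖Matrix.toEuclideanCLM (𝕜 := ℝ) W ev‖ ≤ opNorm W * ‖ev‖ :=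
    (Matrix.toEuclideanCLM (𝕜 := ℝ) W).le_opNorm ev
  have h4 : (inner ℝ ev (Matrix.toEuclideanCLM (𝕜 := ℝ) W ev) : ℝ)
      = x1*(W 0 0*x1 + W 0 1*x2) + x2*(W 1 0*x1 + W 1 1*x2) := by
    rw [h1]
    simp [ev, PiLp.inner_apply, Fin.sum_univ_two, Matrix.mulVec, dotProduct,
      Fin.sum_univ_two, hv]
    ring
  have h5 : ‖ev‖^2 = x1^2 + x2^2 := by
    rw [EuclideanSpace.norm_eq]
    rw [Real.sq_sqrt (by positivity)]
    simp [ev, hv, Fin.sum_univ_two, sq]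
  rw [← h4]
  have h6 := mul_le_mul_of_nonneg_left h3 (norm_nonneg ev)
  have h7 : ‖ev‖ * (opNorm W * ‖ev‖) = opNorm W * (x1^2+x2^2) := by rw [← h5]; ring
  linarith [h2, h6]

lemma pkg (a b g c : ℝ) (h : ∀ x1 x2 : ℝ, a*x1^2 + 2*b*x1*x2 + g*x2^2 ≤ c*(x1^2+x2^2)) :
    a ≤ c ∧ g ≤ c ∧ b^2 ≤ (c-a)*(c-g) := by
  have ha := h 1 0
  have hg := h 0 1
  refine ⟨by linarith, by linarith, ?_⟩
  rcases eq_or_lt_of_le (show a ≤ c by linarith) with hac | hac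
  · have hb : b = 0 := by
      by_contra hb
      subst hac
      set x := (a - g + 1)/(2*b) with hx
      have h2 : 2*b*x = a - g + 1 := by rw [hx]; field_simp
      have h3 := h x 1
      nlinarith [h3, h2]
    rw [hb, ← hac]
    nlinarith
  · have := h b (c - a)
    nlinarith



lemma le_of_sq_le' (x y : ℝ) (hx : 0 ≤ x) (hy : 0 ≤ y) (h : x^2 ≤ y^2) : x ≤ y := by
  calc x = Real.sqrt (x^2) := (Real.sqrt_sq hx).symm
    _ ≤ Real.sqrt (y^2) := Real.sqrt_le_sqrt h
    _ = y := Real.sqrt_sq hy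

lemma core (a b g d lam mu t f1 f2 g1 g2 kap : ℝ)
    (hd : d = a*g - b^2) (hdpos : 0 < d) (ha : 0 < a) (hg : 0 < g)
    (hla : a ≤ lam) (hlg : g ≤ lam) (hlb : b^2 ≤ (lam-a)*(lam-g))
    (hma : a/d ≤ mu) (hmg : g/d ≤ mu) (hmb : (b/d)^2 ≤ (mu-g/d)*(mu-a/d))
    (hdet : f1*g2 - f2*g1 = 1) (htdef : t = f1*g1 + f2*g2) (ht : 0 ≤ t)
    (hF : 1 ≤ f1^2+f2^2) (hG : 1 ≤ g1^2+g2^2)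
    (hB : a*f1*g1 + b*(f1*g2+f2*g1) + g*f2*g2 ≤ 0)
    (hkap : kap = Real.sqrt (lam*mu)) :
    (f1+g1)^2 + (f2+g2)^2 < (1+kap)^2 := by
  obtain ⟨B, hBdef⟩ : ∃ x, x = a*f1*g1 + b*(f1*g2+f2*g1) + g*f2*g2 := ⟨_, rfl⟩
  rw [← hBdef] at hB
  obtain ⟨tau, htau⟩ : ∃ x, x = a + g := ⟨_, rfl⟩
  obtain ⟨rho, hrho⟩ : ∃ x, x = (a-g)^2 + 4*b^2 := ⟨_, rfl⟩
  obtain ⟨nu, hnu⟩ : ∃ x, x = mu * d := ⟨_, rfl⟩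
  -- Lagrange identity
  have hFG : (f1^2+f2^2)*(g1^2+g2^2) = t^2+1 := by
    rw [htdef]; linear_combination (f1*g2 - f2*g1 + 1) * hdet
  have hS : f1^2+f2^2 + (g1^2+g2^2) ≤ t^2 + 2 := by
    have hprod : 0 ≤ ((f1^2+f2^2) - 1) * ((g1^2+g2^2) - 1) :=
      mul_nonneg (by linarith) (by linarith)
    have hexp : ((f1^2+f2^2) - 1) * ((g1^2+g2^2) - 1)
        = (f1^2+f2^2)*(g1^2+g2^2) - (f1^2+f2^2) - (g1^2+g2^2) + 1 := by ring
    linarith [hFG]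
  -- Cauchy-Schwarz with the traceless part of M
  have hid : rho*((f1^2+f2^2)*(g1^2+g2^2)) - (2*B - tau*t)^2
      = (f1*(2*b*g1 - (a-g)*g2) - f2*((a-g)*g1 + 2*b*g2))^2 := by
    rw [hBdef, htau, hrho, htdef]; ring
  have hCS : (2*B - tau*t)^2 ≤ rho*(t^2+1) := by
    rw [hFG] at hid
    linarith [hid, sq_nonneg (f1*(2*b*g1 - (a-g)*g2) - f2*((a-g)*g1 + 2*b*g2))]
  have htau2 : tau^2 = rho + 4*d := by rw [htau, hrho, hd]; ring
  have htaupos : 0 < tau := by rw [htau]; linarith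
  -- bound on t^2 : 4*d*t^2 ≤ rho
  have h4d : 4*(d*t^2) ≤ rho := by
    have k2 : 0 ≤ tau*t := mul_nonneg htaupos.le ht
    have k3 : 0 ≤ (-B)*(tau*t - B) := mul_nonneg (by linarith) (by linarith)
    have e1 : (2*B - tau*t)^2 - (tau*t)^2 = 4*((-B)*(tau*t - B)) := by ring
    have e3 : (tau*t)^2 = rho*t^2 + 4*(d*t^2) := by
      have : (tau*t)^2 = tau^2*t^2 := by ring
      rw [this, htau2]; ring
    have e4 : rho*(t^2+1) = rho*t^2 + rho := by ring
    linarith [hCS, e1, e3, e4, k3]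
  -- nu facts
  have hna : a ≤ nu := by rw [hnu]; rw [div_le_iff₀ hdpos] at hma; linarith
  have hng : g ≤ nu := by rw [hnu]; rw [div_le_iff₀ hdpos] at hmg; linarith
  have hdne : d ≠ 0 := ne_of_gt hdpos
  have hnb : b^2 ≤ (nu-g)*(nu-a) := by
    have e1 : (mu - g/d) * d = mu*d - g := by field_simp
    have e2 : (mu - a/d) * d = mu*d - a := by field_simp
    rw [hnu]
    calc b^2 = ((b/d)*d)^2 := by rw [div_mul_cancel₀ _ hdne]
      _ = (b/d)^2 * d^2 := by ring
      _ ≤ ((mu-g/d)*(mu-a/d)) * d^2 := mul_le_mul_of_nonneg_right hmb (sq_nonneg d)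
      _ = ((mu-g/d)*d) * ((mu-a/d)*d) := by ring
      _ = (mu*d-g)*(mu*d-a) := by rw [e1, e2]
  obtain ⟨r, hr⟩ : ∃ x, x = Real.sqrt rho := ⟨_, rfl⟩
  have hrhonn : 0 ≤ rho := by rw [hrho]; positivity
  have hr2 : r^2 = rho := by rw [hr]; exact Real.sq_sqrt hrhonn
  have hrnn : 0 ≤ r := by rw [hr]; exact Real.sqrt_nonneg _
  have hlpos : 0 ≤ 2*lam - tau := by rw [htau]; linarith
  have hnpos : 0 ≤ 2*nu - tau := by rw [htau]; linarith
  have hquadl : rho ≤ (2*lam - tau)^2 := by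
    rw [hrho, htau]
    have e : (2*lam - (a+g))^2 - ((a-g)^2+4*b^2) = 4*((lam-a)*(lam-g) - b^2) := by ring
    linarith [hlb, e]
  have hquadn : rho ≤ (2*nu - tau)^2 := by
    rw [hrho, htau]
    have e : (2*nu - (a+g))^2 - ((a-g)^2+4*b^2) = 4*((nu-g)*(nu-a) - b^2) := by ring
    linarith [hnb, e]
  have h2l : r ≤ 2*lam - tau := le_of_sq_le' _ _ hrnn hlpos (by rw [hr2]; exact hquadl)
  have h2n : r ≤ 2*nu - tau := le_of_sq_le' _ _ hrnn hnpos (by rw [hr2]; exact hquadn)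
  have hln : (tau+r)^2 ≤ 4*(lam*nu) := by
    have hh : (tau+r)/2*((tau+r)/2) ≤ lam*nu :=
      mul_le_mul (by linarith) (by linarith) (by positivity) (by linarith)
    have e : (tau+r)^2 = 4*((tau+r)/2*((tau+r)/2)) := by ring
    linarith [hh, e]
  obtain ⟨sd, hsd⟩ : ∃ x, x = Real.sqrt d := ⟨_, rfl⟩
  have hsd2 : sd^2 = d := by rw [hsd]; exact Real.sq_sqrt (le_of_lt hdpos)
  have hsdpos : 0 < sd := by rw [hsd]; exact Real.sqrt_pos.2 hdpos
  have h2sdt : 2*sd*t ≤ r := by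
    refine le_of_sq_le' _ _ (by positivity) hrnn ?_
    have e : (2*sd*t)^2 = 4*(d*t^2) := by rw [← hsd2]; ring
    rw [e, hr2]; exact h4d
  have h2sd : 2*sd ≤ tau := by
    refine le_of_sq_le' _ _ (by positivity) htaupos.le ?_
    have e : (2*sd)^2 = 4*d := by rw [← hsd2]; ring
    rw [e, htau2]; linarith [hrhonn]
  have hmupos : 0 < mu := lt_of_lt_of_le (by positivity) hma
  have hte : (t+1)^2 ≤ lam*mu := by
    have h1 : 2*sd*(t+1) ≤ tau + r := by
      have e : 2*sd*(t+1) = 2*sd*t + 2*sd := by ring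
      linarith [h2sdt, h2sd, e]
    have h2 : (2*sd*(t+1))^2 ≤ (tau+r)^2 := pow_le_pow_left₀ (by positivity) h1 2
    have e2 : (2*sd*(t+1))^2 = 4*(d*(t+1)^2) := by rw [← hsd2]; ring
    have h3 : (t+1)^2 * d ≤ (lam*mu) * d := by
      have e3 : 4*(lam*nu) = 4*((lam*mu)*d) := by rw [hnu]; ring
      linarith [h2, hln, e2, e3]
    exact le_of_mul_le_mul_right h3 hdpos
  have hlmnn : 0 ≤ lam*mu := le_of_lt (mul_pos (lt_of_lt_of_le ha hla) hmupos)
  have hkapnn : 0 ≤ kap := by rw [hkap]; exact Real.sqrt_nonneg _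
  have hkap2 : kap^2 = lam*mu := by rw [hkap]; exact Real.sq_sqrt hlmnn
  have hkge : t + 1 ≤ kap := by
    refine le_of_sq_le' _ _ (by linarith) hkapnn ?_
    rw [hkap2]; exact hte
  have eE : (f1+g1)^2+(f2+g2)^2 = (f1^2+f2^2) + (g1^2+g2^2) + 2*t := by
    rw [htdef]; ring
  have hk2 : (t+1)*(t+1) ≤ kap*kap :=
    mul_le_mul hkge hkge (by linarith) (by linarith)
  linarith [hS, eE, hk2, hkge, ht]


lemma sq_one_le_of_ne_zero (z : ℤ × ℤ) (h1 : ¬(z.1 = 0 ∧ z.2 = 0)) : 1 ≤ z.1^2 + z.2^2 := by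
  rcases not_and_or.mp h1 with h | h
  · nlinarith [sq_nonneg z.2, Int.one_le_abs h, sq_abs z.1, sq_nonneg (z.1.natAbs : ℤ)]
  · nlinarith [sq_nonneg z.1, Int.one_le_abs h, sq_abs z.2]

/-- If `e = f ⊕ g` and `‖e‖ ≥ 1 + κ(M)` with `κ(M) = √(‖M‖ ‖M⁻¹‖)`,
then `⟨f, M g⟩ > 0`. -/
theorem stmt15_far_vertices_acute (M : Matrix (Fin 2) (Fin 2) ℝ)
    (hsym : M.IsSymm) (hpos : M.PosDef)
    (e f g : ℤ × ℤ) (hdab : IsDAB f g) (he : e = f + g)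
    (hnorm : 1 + Real.sqrt (opNorm M * opNorm M⁻¹)
      ≤ Real.sqrt ((e.1 : ℝ) ^ 2 + (e.2 : ℝ) ^ 2)) :
    0 < qf M f g := by
  by_contra hq
  push_neg at hq
  obtain ⟨hdet, hip⟩ := hdab
  set a := M 0 0 with ha'
  set b := M 0 1 with hb'
  set c := M 1 1 with hc'
  have hβ : M 1 0 = b := by
    have := hsym.apply 0 1
    simpa using this
  -- positivity facts
  have hapos : 0 < a := by
    have h := hpos.dotProduct_mulVec_pos (x := ![(1:ℝ), 0]) (by
      intro h; have := congrFun h 0; simp at this)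
    simpa [dotProduct, Matrix.mulVec, Fin.sum_univ_two] using h
  have hcpos : 0 < c := by
    have h := hpos.dotProduct_mulVec_pos (x := ![(0:ℝ), 1]) (by
      intro h; have := congrFun h 1; simp at this)
    simpa [dotProduct, Matrix.mulVec, Fin.sum_univ_two] using h
  have hdetM : M.det = a * c - b^2 := by
    rw [Matrix.det_fin_two, hβ]; ring
  have hdpos : 0 < a * c - b^2 := by
    have := hpos.det_pos
    rwa [hdetM] at this
  set d := a * c - b^2 with hd'
  have hdne : d ≠ 0 := ne_of_gt hdpos
  -- explicit inverse
  set N : Matrix (Fin 2) (Fin 2) ℝ := !![c/d, -b/d; -b/d, a/d] with hN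
  have hMN : M * N = 1 := by
    ext i j
    fin_cases i <;> fin_cases j <;>
      simp [hN, Matrix.mul_apply, Fin.sum_univ_two, hβ] <;>
      field_simp <;> ring
  have hMinv : M⁻¹ = N := Matrix.inv_eq_right_inv hMN
  -- opNorm quadratic form bounds
  have hQl : ∀ x1 x2 : ℝ, a*x1^2 + 2*b*x1*x2 + c*x2^2 ≤ opNorm M * (x1^2+x2^2) := by
    intro x1 x2
    have h := quad_le_opNorm M x1 x2
    rw [hβ] at h
    nlinarith [h]
  have hQm : ∀ x1 x2 : ℝ, (c/d)*x1^2 + 2*(-b/d)*x1*x2 + (a/d)*x2^2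
      ≤ opNorm M⁻¹ * (x1^2+x2^2) := by
    intro x1 x2
    have h := quad_le_opNorm M⁻¹ x1 x2
    have e00 : M⁻¹ 0 0 = c/d := by rw [hMinv, hN]; simp
    have e01 : M⁻¹ 0 1 = -b/d := by rw [hMinv, hN]; simp
    have e10 : M⁻¹ 1 0 = -b/d := by rw [hMinv, hN]; simp
    have e11 : M⁻¹ 1 1 = a/d := by rw [hMinv, hN]; simp
    rw [e00, e01, e10, e11] at h
    nlinarith [h]
  obtain ⟨hla, hlg, hlb⟩ := pkg a b c (opNorm M) hQl
  obtain ⟨hma, hmg, hmb⟩ := pkg (c/d) (-b/d) (a/d) (opNorm M⁻¹) hQm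
  -- integer facts
  have hfne : ¬(f.1 = 0 ∧ f.2 = 0) := by
    rintro ⟨h1, h2⟩; rw [det2, h1, h2] at hdet; simp at hdet
  have hgne : ¬(g.1 = 0 ∧ g.2 = 0) := by
    rintro ⟨h1, h2⟩; rw [det2, h1, h2] at hdet; simp at hdet
  have hF : (1:ℝ) ≤ (f.1:ℝ)^2 + (f.2:ℝ)^2 := by
    exact_mod_cast (sq_one_le_of_ne_zero f hfne)
  have hG : (1:ℝ) ≤ (g.1:ℝ)^2 + (g.2:ℝ)^2 := by
    exact_mod_cast (sq_one_le_of_ne_zero g hgne)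
  have hdetr : (f.1:ℝ)*(g.2:ℝ) - (f.2:ℝ)*(g.1:ℝ) = 1 := by
    have : ((det2 f g : ℤ) : ℝ) = 1 := by rw [hdet]; norm_num
    rw [det2] at this; push_cast at this; linarith
  have htr : (0:ℝ) ≤ (f.1:ℝ)*(g.1:ℝ) + (f.2:ℝ)*(g.2:ℝ) := by
    have : (0:ℝ) ≤ ((ip2 f g : ℤ) : ℝ) := by exact_mod_cast hip
    rw [ip2] at this; push_cast at this; linarith
  have hB : a*(f.1:ℝ)*(g.1:ℝ) + b*((f.1:ℝ)*(g.2:ℝ)+(f.2:ℝ)*(g.1:ℝ)) + c*(f.2:ℝ)*(g.2:ℝ) ≤ 0 := by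
    rw [qf, hβ] at hq
    nlinarith [hq]
  -- the norm hypothesis
  set kap := Real.sqrt (opNorm M * opNorm M⁻¹) with hkap
  have hkapnn : 0 ≤ kap := Real.sqrt_nonneg _
  have he1 : (e.1:ℝ) = (f.1:ℝ) + (g.1:ℝ) := by rw [he]; push_cast [Prod.fst_add]; ring
  have he2 : (e.2:ℝ) = (f.2:ℝ) + (g.2:ℝ) := by rw [he]; push_cast [Prod.snd_add]; ring
  have hEnn : (0:ℝ) ≤ (e.1:ℝ)^2 + (e.2:ℝ)^2 := by positivity
  have hEsq : (1+kap)^2 ≤ ((f.1:ℝ)+(g.1:ℝ))^2 + ((f.2:ℝ)+(g.2:ℝ))^2 := by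
    have h2 := pow_le_pow_left₀ (by linarith) hnorm 2
    rw [Real.sq_sqrt hEnn] at h2
    rw [← he1, ← he2]
    exact h2
  have hcont := core a b c d (opNorm M) (opNorm M⁻¹)
    ((f.1:ℝ)*(g.1:ℝ) + (f.2:ℝ)*(g.2:ℝ)) (f.1:ℝ) (f.2:ℝ) (g.1:ℝ) (g.2:ℝ) kap
    hd' hdpos hapos hcpos hla hlg hlb hmg hma
    (by have ee : (-b/d)^2 = (b/d)^2 := by ring
        rw [ee] at hmb; exact hmb) hdetr rfl htr hF hG hB hkap
  linarith [hcont, hEsq]
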